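/- Let P_0 and R_0 be non-isomorphic posets, each of size m, and let i ≥ 1. Then no witness to D_{m+i+1}(P_iR_i) has size less than |P_iR_i| = 2m + 2i. -/

import Mathlib

/-!
Formalization framework: finite posets are bundled as `FinPartOrd.{0}`, downsets are
`Finset`s of elements, unlabelled posets are isomorphism classes (`UPoset`), and a witness
of a set `Γ` of unlabelled posets at size `n` is a finite poset whose set of size-`n`
downsets, up to isomorphism, is exactly `Γ`.
-/

attribute [local instance] Classical.propDecidable

noncomputable section

open Finset

/-- `D` is a downset of the finite poset `Q`. -/
def IsDownset (Q : FinPartOrd.{0}) (D : Finset ↥Q) : Prop :=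
  ∀ ⦃a b : ↥Q⦄, a ∈ D → b ≤ a → b ∈ D

/-- The induced subposet of `Q` on a finset `D` of its elements. -/
def subposet (Q : FinPartOrd.{0}) (D : Finset ↥Q) : FinPartOrd.{0} :=
  FinPartOrd.of {x : ↥Q // x ∈ D}

/-- The isomorphism setoid on finite posets. -/
def isoSetoid : Setoid FinPartOrd.{0} where
  r P Q := Nonempty (↥P ≃o ↥Q)
  iseqv := ⟨fun _ => ⟨OrderIso.refl _⟩, fun ⟨e⟩ => ⟨e.symm⟩, fun ⟨e⟩ ⟨f⟩ => ⟨e.trans f⟩⟩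

/-- Unlabelled finite posets: isomorphism classes of finite posets. -/
def UPoset := Quotient isoSetoid

/-- The isomorphism class of a finite poset. -/
def cls (P : FinPartOrd.{0}) : UPoset := Quotient.mk isoSetoid P

/-- The number of elements of a finite poset. -/
def size (Q : FinPartOrd.{0}) : ℕ := Fintype.card ↥Q

/-- The size of an isomorphism class of finite posets. -/
def usize : UPoset → ℕ :=
  Quotient.lift size fun _ _ h => h.elim fun e => Fintype.card_congr e.toEquiv

/-- `D_n(Q)` : the set of downsets of `Q` of size `n`, up to isomorphism. -/
def DSet (n : ℕ) (Q : FinPartOrd.{0}) : Set UPoset :=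
  {c | ∃ D : Finset ↥Q, IsDownset Q D ∧ D.card = n ∧ cls (subposet Q D) = c}

/-- `d_n(Q)` : the number of isomorphism classes of downsets of `Q` of size `n`. -/
def dNum (n : ℕ) (Q : FinPartOrd.{0}) : ℕ := (DSet n Q).ncard

/-- `D(Q)` : the set of nonempty downsets of `Q`, up to isomorphism. -/
def DAllSet (Q : FinPartOrd.{0}) : Set UPoset :=
  {c | ∃ D : Finset ↥Q, IsDownset Q D ∧ D.Nonempty ∧ cls (subposet Q D) = c}

/-- `Q` is a witness of the set `Γ` of unlabelled posets (at size `n`): the set of size-`n`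
downsets of `Q`, up to isomorphism, is exactly `Γ`. -/
def IsWitness (n : ℕ) (Γ : Set UPoset) (Q : FinPartOrd.{0}) : Prop := DSet n Q = Γ

/-- `Q` is a minimal witness of `Γ` : `Q` is a witness and no proper downset of `Q` is
itself a witness of `Γ`. -/
def IsMinimalWitness (n : ℕ) (Γ : Set UPoset) (Q : FinPartOrd.{0}) : Prop :=
  IsWitness n Γ Q ∧
    ∀ D : Finset ↥Q, IsDownset Q D → D ≠ Finset.univ → ¬IsWitness n Γ (subposet Q D)

/-- The height of an element: the number of elements of a longest chain whose maximum is `x`. -/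
def heightEl (Q : FinPartOrd.{0}) (x : ↥Q) : ℕ :=
  sSup {k | ∃ c : Finset ↥Q, IsChain (· ≤ ·) (c : Set ↥Q) ∧ x ∈ c ∧ (∀ y ∈ c, y ≤ x) ∧ c.card = k}

/-- The height of a finite poset: the number of elements of a longest chain. -/
def posetHeight (Q : FinPartOrd.{0}) : ℕ :=
  sSup {k | ∃ c : Finset ↥Q, IsChain (· ≤ ·) (c : Set ↥Q) ∧ c.card = k}

/-- A finite poset is Newtonian if every element of level `i` covers every element of
level `i - 1`. -/
def Newtonian (Q : FinPartOrd.{0}) : Prop :=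
  ∀ x y : ↥Q, heightEl Q y = heightEl Q x + 1 → x ⋖ y

/-- A finite poset is connected if it is nonempty and any two elements are joined by a
comparability path. -/
def ConnectedPoset (Q : FinPartOrd.{0}) : Prop :=
  Nonempty ↥Q ∧ ∀ x y : ↥Q, Relation.ReflTransGen (fun a b : ↥Q => a ≤ b ∨ b ≤ a) x y

/-- `x` is a maximal element of the subset `W` of `Q`. -/
def IsMaxIn (Q : FinPartOrd.{0}) (W : Finset ↥Q) (x : ↥Q) : Prop :=
  x ∈ W ∧ ∀ y ∈ W, x ≤ y → y = x

/-- `x` is a maximal element of the finite poset `R`. -/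
def IsMaxEl (R : FinPartOrd.{0}) (x : ↥R) : Prop := ∀ y, x ≤ y → y = x

/-- A poset of type 𝒲 : the disjoint union of two connected Newtonian posets that are not
isomorphic, but which only differ in one maximal element (they become isomorphic after the
removal of a suitable maximal element from each). -/
def TypeW (P : FinPartOrd.{0}) : Prop :=
  ∃ W₁ W₂ : Finset ↥P,
    W₁ ∪ W₂ = Finset.univ ∧ Disjoint W₁ W₂ ∧
    (∀ x ∈ W₁, ∀ y ∈ W₂, ¬x ≤ y ∧ ¬y ≤ x) ∧
    ConnectedPoset (subposet P W₁) ∧ ConnectedPoset (subposet P W₂) ∧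
    Newtonian (subposet P W₁) ∧ Newtonian (subposet P W₂) ∧
    ¬Nonempty (↥(subposet P W₁) ≃o ↥(subposet P W₂)) ∧
    ∃ x y, IsMaxIn P W₁ x ∧ IsMaxIn P W₂ y ∧
      Nonempty (↥(subposet P (W₁.erase x)) ≃o ↥(subposet P (W₂.erase y)))

/-- An antichain on `i` elements. -/
def AntichainFin (i : ℕ) : Type := Fin i

instance (i : ℕ) : PartialOrder (AntichainFin i) where
  le x y := x = y
  le_refl _ := rfl
  le_trans a b c h₁ h₂ := show a = c from (show a = b from h₁).trans (show b = c from h₂)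
  le_antisymm _ _ h _ := h

instance (i : ℕ) : Fintype (AntichainFin i) := inferInstanceAs (Fintype (Fin i))
instance (i : ℕ) : Fintype (WithTop (AntichainFin i)) :=
  inferInstanceAs (Fintype (Option (Fin i)))

/-- `Λ_i`: the poset with `i` minimal elements and one maximal element above all of them. -/
def Lambda (i : ℕ) : FinPartOrd.{0} := FinPartOrd.of (WithTop (AntichainFin i))

/-- `k` disjoint copies of a poset `α`. -/
def Copies (k : ℕ) (α : Type) : Type := Fin k × α

instance (k : ℕ) (α : Type) [PartialOrder α] : PartialOrder (Copies k α) where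
  le x y := x.1 = y.1 ∧ x.2 ≤ y.2
  le_refl _ := ⟨rfl, le_refl _⟩
  le_trans _ _ _ h₁ h₂ := ⟨h₁.1.trans h₂.1, le_trans h₁.2 h₂.2⟩
  le_antisymm x y h₁ h₂ := by
    obtain ⟨x₁, x₂⟩ := x
    obtain ⟨y₁, y₂⟩ := y
    obtain ⟨h, h'⟩ := h₁
    cases h
    exact congrArg _ (le_antisymm h' h₂.2)

instance (k : ℕ) (α : Type) [Fintype α] : Fintype (Copies k α) :=
  inferInstanceAs (Fintype (Fin k × α))

/-- `H_ℓ`: the poset whose connected components are `ℓ` copies of `Λ₂` and one copy of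
`Λ_{3(ℓ-1)}`. -/
def Hposet (ℓ : ℕ) : FinPartOrd.{0} :=
  FinPartOrd.of (Copies ℓ (WithTop (AntichainFin 2)) ⊕ WithTop (AntichainFin (3 * (ℓ - 1))))

/-- The poset `P₀` placed above a chain of `i` elements. -/
def withChain (P₀ : FinPartOrd.{0}) (i : ℕ) : FinPartOrd.{0} :=
  FinPartOrd.of (Fin i ⊕ₗ ↥P₀)

/-- The disjoint union of two finite posets. -/
def disjSum (P R : FinPartOrd.{0}) : FinPartOrd.{0} := FinPartOrd.of (↥P ⊕ ↥R)

/-- The poset `P_iR_i`: the disjoint union of `P₀` and `R₀` each placed above a chain of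
`i` elements. -/
def PRposet (P₀ R₀ : FinPartOrd.{0}) (i : ℕ) : FinPartOrd.{0} :=
  disjSum (withChain P₀ i) (withChain R₀ i)

/-- `C(P₀R₀) = |D(P₀)| + |D(R₀)| − |D(P₀) ∩ D(R₀)|`. -/
def CNum (P₀ R₀ : FinPartOrd.{0}) : ℕ :=
  (DAllSet P₀).ncard + (DAllSet R₀).ncard - (DAllSet P₀ ∩ DAllSet R₀).ncard

/-- The vertices of the exchange graph: the downsets of `Q` of size `n`, as actual subsets. -/
def EGVert (n : ℕ) (Q : FinPartOrd.{0}) : Type :=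
  {D : Finset ↥Q // IsDownset Q D ∧ D.card = n}

/-- The exchange graph `G_n(Q)`: two size-`n` downsets are adjacent iff they differ by
exactly one element. -/
def ExchangeGraph (n : ℕ) (Q : FinPartOrd.{0}) : SimpleGraph (EGVert n Q) where
  Adj X Y := (X.1 \ Y.1).card = 1 ∧ (Y.1 \ X.1).card = 1
  symm := ⟨fun X Y h => ⟨h.2, h.1⟩⟩
  loopless := ⟨fun X h => by
    simp only [Finset.sdiff_self, Finset.card_empty] at h
    exact absurd h.1 (by simp)⟩

/-- The downset `D` of `Q`, viewed as a poset, is isomorphic (a "copy of") `P`. -/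
def IsoTo (Q : FinPartOrd.{0}) (D : Finset ↥Q) (P : FinPartOrd.{0}) : Prop :=
  Nonempty (↥(subposet Q D) ≃o ↥P)

/-- A path `A :: M ++ [C]` in the exchange graph `G_n(Q)` whose first vertex is a copy of
`Pa`, whose last vertex is a copy of `Pb`, and all of whose internal vertices are copies of
`Pmid`. -/
def SpecialPath (n : ℕ) (Q : FinPartOrd.{0}) (Pa Pmid Pb : FinPartOrd.{0})
    (A : EGVert n Q) (M : List (EGVert n Q)) (C : EGVert n Q) : Prop :=
  List.Chain' (ExchangeGraph n Q).Adj (A :: M ++ [C]) ∧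
    IsoTo Q A.1 Pa ∧ IsoTo Q C.1 Pb ∧ ∀ v ∈ M, IsoTo Q v.1 Pmid

/-- `T` is an antichain in `Q`. -/
def IsAntichainIn (Q : FinPartOrd.{0}) (T : Finset ↥Q) : Prop :=
  ∀ x ∈ T, ∀ y ∈ T, x ≤ y → x = y

/-- The possible shapes of `A \ X` and `C \ X`: an antichain possibly together with a single
element below all of it and/or a single element above all of it, or a two-element chain
together with one incomparable element. -/
def GoodForm (Q : FinPartOrd.{0}) (S : Finset ↥Q) : Prop :=
  (∃ T : Finset ↥Q, IsAntichainIn Q T ∧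
    (S = T ∨
      (∃ b, b ∉ T ∧ S = insert b T ∧ ∀ x ∈ T, b < x) ∨
      (∃ t, t ∉ T ∧ S = insert t T ∧ ∀ x ∈ T, x < t) ∨
      (∃ b t, b ∉ T ∧ t ∉ T ∧ b ≠ t ∧ S = insert b (insert t T) ∧
        (∀ x ∈ T, b < x) ∧ ∀ x ∈ T, x < t))) ∨
  (∃ x y z : ↥Q, S = {x, y, z} ∧ x ≠ y ∧ x ≠ z ∧ y ≠ z ∧ x < y ∧
    ¬x ≤ z ∧ ¬z ≤ x ∧ ¬y ≤ z ∧ ¬z ≤ y)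

-- ==================== aux ====================
section AuxProof

open Relation

lemma cls_eq_iso {X Y : FinPartOrd.{0}} (h : cls X = cls Y) : Nonempty (↥X ≃o ↥Y) :=
  Quotient.exact h

lemma sum_le_isLeft {α β : Type} [LE α] [LE β]
    {x y : α ⊕ β} (h : x ≤ y) : x.isLeft = y.isLeft := by
  cases x <;> cases y
  · rfl
  · exact absurd h Sum.not_inl_le_inr
  · exact absurd h Sum.not_inr_le_inl
  · rfl

/-- size of withChain -/
lemma size_withChain (P₀ : FinPartOrd.{0}) (i : ℕ) : size (withChain P₀ i) = i + size P₀ := by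
  show Fintype.card (Fin i ⊕ₗ ↥P₀) = _
  rw [Fintype.card_congr (ofLex : Fin i ⊕ₗ ↥P₀ ≃ Fin i ⊕ ↥P₀)]
  simp [size]

/-- bottom of withChain -/
lemma withChain_bot (P₀ : FinPartOrd.{0}) (i : ℕ) (hi : 1 ≤ i) :
    ∃ β : ↥(withChain P₀ i), ∀ x, β ≤ x := by
  refine ⟨toLex (Sum.inl ⟨0, hi⟩), fun x => ?_⟩
  obtain a | b := x
  · exact Sum.Lex.inl_le_inl_iff.2 (Fin.mk_le_mk.2 (Nat.zero_le _))
  · exact Sum.Lex.inl_le_inr _ _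

end AuxProof

section AuxPeel

lemma below_inl_form {i : ℕ} {γ : Type} [PartialOrder γ] (k : Fin i)
    (y : {y : Fin i ⊕ₗ γ // y ≤ toLex (Sum.inl k)}) : ∃ a : Fin i, y.1 = toLex (Sum.inl a) := by
  obtain ⟨y, hy⟩ := y
  obtain a | b := y
  · exact ⟨a, rfl⟩
  · exact absurd hy Sum.Lex.not_inr_le_inl

lemma card_le_below_inl {i : ℕ} {γ : Type} [PartialOrder γ] [Fintype γ] (k : Fin i) :
    Fintype.card {y : Fin i ⊕ₗ γ // y ≤ toLex (Sum.inl k)} ≤ i := by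
  have hinj : Function.Injective (fun y : {y : Fin i ⊕ₗ γ // y ≤ toLex (Sum.inl k)} =>
      (below_inl_form k y).choose) := by
    intro y z h
    have h' : (below_inl_form k y).choose = (below_inl_form k z).choose := h
    have hy := (below_inl_form k y).choose_spec
    have hz := (below_inl_form k z).choose_spec
    exact Subtype.ext (by rw [hy, hz, h'])
  simpa using Fintype.card_le_of_injective _ hinj

lemma card_ge_below_inr {i : ℕ} {γ : Type} [PartialOrder γ] [Fintype γ] (p : γ) :
    i + 1 ≤ Fintype.card {y : Fin i ⊕ₗ γ // y ≤ toLex (Sum.inr p)} := by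
  have hinj : Function.Injective
      (fun o : Option (Fin i) =>
        (Option.elim o ⟨toLex (Sum.inr p), le_refl _⟩
          (fun j => ⟨toLex (Sum.inl j), Sum.Lex.inl_le_inr _ _⟩) :
          {y : Fin i ⊕ₗ γ // y ≤ toLex (Sum.inr p)})) := by
    rintro (_ | a) (_ | b) h <;> simp only [Option.elim, Subtype.mk.injEq] at h
    · rfl
    · exact absurd h (by simp)
    · exact absurd h (by simp)
    · have : (Sum.inl a : Fin i ⊕ γ) = Sum.inl b := h
      simp_all
  simpa using Fintype.card_le_of_injective _ hinj

lemma peel_key {i : ℕ} {γ δ : Type} [PartialOrder γ] [PartialOrder δ] [Fintype γ] [Fintype δ]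
    (f : (Fin i ⊕ₗ γ) ≃o (Fin i ⊕ₗ δ)) (p : γ) :
    ∃ q, f (toLex (Sum.inr p)) = toLex (Sum.inr q) := by
  have hcard : Fintype.card {y : Fin i ⊕ₗ γ // y ≤ toLex (Sum.inr p)} =
      Fintype.card {y : Fin i ⊕ₗ δ // y ≤ f (toLex (Sum.inr p))} := by
    refine Fintype.card_congr (Equiv.subtypeEquiv f.toEquiv fun a => ?_)
    exact ⟨fun h => f.le_iff_le.2 h, fun h => f.le_iff_le.1 h⟩
  rcases hfp : ofLex (f (toLex (Sum.inr p))) with a | b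
  · exfalso
    have hx : f (toLex (Sum.inr p)) = toLex (Sum.inl a) := congrArg toLex hfp
    rw [hx] at hcard
    have h1 := card_ge_below_inr (i := i) (γ := γ) p
    have h2 := card_le_below_inl (i := i) (γ := δ) a
    omega
  · exact ⟨b, congrArg toLex hfp⟩

lemma peel {i : ℕ} {γ δ : Type} [PartialOrder γ] [PartialOrder δ] [Fintype γ] [Fintype δ]
    (f : (Fin i ⊕ₗ γ) ≃o (Fin i ⊕ₗ δ)) : Nonempty (γ ≃o δ) := by
  have hf := fun p => peel_key f p
  have hg := fun q => peel_key f.symm q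
  have li : ∀ p, (hg ((hf p).choose)).choose = p := by
    intro p
    have h1 := (hf p).choose_spec
    have h2 := (hg ((hf p).choose)).choose_spec
    have : (toLex (Sum.inr p) : Fin i ⊕ₗ γ) = toLex (Sum.inr (hg ((hf p).choose)).choose) := by
      rw [← h2, ← h1, f.symm_apply_apply]
    simpa using (toLex.injective this).symm
  have ri : ∀ q, (hf ((hg q).choose)).choose = q := by
    intro q
    have h1 := (hg q).choose_spec
    have h2 := (hf ((hg q).choose)).choose_spec
    have : (toLex (Sum.inr q) : Fin i ⊕ₗ δ) = toLex (Sum.inr (hf ((hg q).choose)).choose) := by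
      rw [← h2, ← h1, f.apply_symm_apply]
    simpa using (toLex.injective this).symm
  refine ⟨⟨⟨fun p => (hf p).choose, fun q => (hg q).choose, li, ri⟩, ?_⟩⟩
  intro a b
  show (hf a).choose ≤ (hf b).choose ↔ a ≤ b
  rw [← Sum.Lex.inr_le_inr_iff (α := Fin i), ← (hf a).choose_spec, ← (hf b).choose_spec,
    f.le_iff_le, Sum.Lex.inr_le_inr_iff]

end AuxPeel

section Aux2
open Relation

lemma fintype_card_indep {T : Type} {h1 h2 : Fintype T} :
    @Fintype.card T h1 = @Fintype.card T h2 :=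
  congrArg (fun h => @Fintype.card T h) (Subsingleton.elim h1 h2)

lemma card_eq_of_iso_subposet {Q' : FinPartOrd.{0}} (D : Finset ↥Q') {X : FinPartOrd.{0}}
    (e : ↥(subposet Q' D) ≃o ↥X) : D.card = Fintype.card ↥X := by
  rw [← Fintype.card_coe]
  exact (fintype_card_indep ..).trans (Fintype.card_congr e.toEquiv)

lemma restrict_iso (Q Q' : FinPartOrd.{0}) (A : Finset ↥Q) (hA : IsDownset Q A)
    (D D₁ : Finset ↥Q') (hsub : D₁ ⊆ D)
    (hdc : ∀ x y : ↥Q', y ∈ D₁ → x ≤ y → x ∈ D₁)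
    (e : ↥(subposet Q A) ≃o ↥(subposet Q' D)) :
    ∃ A₁ : Finset ↥Q, A₁ ⊆ A ∧ IsDownset Q A₁ ∧ A₁.card = D₁.card ∧
      Nonempty (↥(subposet Q A₁) ≃o ↥(subposet Q' D₁)) := by
  classical
  set A₁ : Finset ↥Q :=
    A.filter (fun x => ∃ hx : x ∈ A, (e ⟨x, hx⟩).1 ∈ D₁) with hA₁def
  have memA₁ : ∀ x (hx : x ∈ A), (x ∈ A₁ ↔ (e ⟨x, hx⟩).1 ∈ D₁) := by
    intro x hx
    simp only [hA₁def, Finset.mem_filter]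
    exact ⟨fun ⟨_, _, h⟩ => h, fun h => ⟨hx, hx, h⟩⟩
  have hsubA : A₁ ⊆ A := Finset.filter_subset _ _
  have hdown : IsDownset Q A₁ := by
    intro a b ha hba
    have haA : a ∈ A := hsubA ha
    have hbA : b ∈ A := hA haA hba
    have hle : (⟨b, hbA⟩ : {x : ↥Q // x ∈ A}) ≤ ⟨a, haA⟩ := hba
    have h2 : (e ⟨b, hbA⟩).1 ≤ (e ⟨a, haA⟩).1 := e.le_iff_le.2 hle
    exact (memA₁ b hbA).2 (hdc _ _ ((memA₁ a haA).1 ha) h2)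
  have himg : ∀ x : {a : ↥Q // a ∈ A₁}, (e ⟨x.1, hsubA x.2⟩).1 ∈ D₁ :=
    fun x => (memA₁ _ (hsubA x.2)).1 x.2
  have himg' : ∀ y : {b : ↥Q' // b ∈ D₁}, (e.symm ⟨y.1, hsub y.2⟩).1 ∈ A₁ := by
    intro y
    set x := e.symm ⟨y.1, hsub y.2⟩ with hx
    refine (memA₁ x.1 x.2).2 ?_
    have : e ⟨x.1, x.2⟩ = ⟨y.1, hsub y.2⟩ := by
      rw [hx]; exact e.apply_symm_apply _
    rw [this]
    exact y.2
  let F : {a : ↥Q // a ∈ A₁} → {b : ↥Q' // b ∈ D₁} :=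
    fun x => ⟨(e ⟨x.1, hsubA x.2⟩).1, himg x⟩
  let G : {b : ↥Q' // b ∈ D₁} → {a : ↥Q // a ∈ A₁} :=
    fun y => ⟨(e.symm ⟨y.1, hsub y.2⟩).1, himg' y⟩
  have li : ∀ x, G (F x) = x := by
    intro x
    apply Subtype.ext
    show (e.symm ⟨(e ⟨x.1, hsubA x.2⟩).1, hsub (himg x)⟩).1 = x.1
    have h1 : (⟨(e ⟨x.1, hsubA x.2⟩).1, hsub (himg x)⟩ : ↥(subposet Q' D)) =
        e ⟨x.1, hsubA x.2⟩ := rfl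
    rw [h1]; exact congrArg Subtype.val (e.symm_apply_apply _)
  have ri : ∀ y, F (G y) = y := by
    intro y
    apply Subtype.ext
    show (e ⟨(e.symm ⟨y.1, hsub y.2⟩).1, hsubA (himg' y)⟩).1 = y.1
    have h1 : (⟨(e.symm ⟨y.1, hsub y.2⟩).1, hsubA (himg' y)⟩ : ↥(subposet Q A)) =
        e.symm ⟨y.1, hsub y.2⟩ := rfl
    rw [h1]; exact congrArg Subtype.val (e.apply_symm_apply _)
  have EQ : {a : ↥Q // a ∈ A₁} ≃ {b : ↥Q' // b ∈ D₁} := ⟨F, G, li, ri⟩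
  have hcard : A₁.card = D₁.card := by
    rw [← Fintype.card_coe, ← Fintype.card_coe]
    exact Fintype.card_congr EQ
  refine ⟨A₁, hsubA, hdown, hcard, ⟨⟨⟨F, G, li, ri⟩, ?_⟩⟩⟩
  intro x y
  show F x ≤ F y ↔ x ≤ y
  constructor
  · intro h
    have h' : e ⟨x.1, hsubA x.2⟩ ≤ e ⟨y.1, hsubA y.2⟩ := h
    have h'' := e.le_iff_le.1 h'
    exact h''
  · intro h
    have h' : (⟨x.1, hsubA x.2⟩ : ↥(subposet Q A)) ≤ ⟨y.1, hsubA y.2⟩ := h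
    have h'' := e.le_iff_le.2 h'
    exact h''

end Aux2

section Aux3
open Relation

/-- The left part of a disjoint sum, as subposet, is iso to the left factor. -/
lemma subposet_image_inl (P R : FinPartOrd.{0}) :
    Nonempty (↥(subposet (disjSum P R) (Finset.univ.image Sum.inl)) ≃o ↥P) := by
  let f : ↥P → ↥(subposet (disjSum P R) (Finset.univ.image Sum.inl)) :=
    fun p => ⟨Sum.inl p, Finset.mem_image.2 ⟨p, Finset.mem_univ _, rfl⟩⟩
  have hinj : Function.Injective f := by
    intro a b h
    have := congrArg Subtype.val h
    exact Sum.inl_injective this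
  have hmaple : ∀ a b : ↥P, f a ≤ f b ↔ a ≤ b := by
    intro a b
    constructor
    · intro h
      have h' : (Sum.inl a : ↥P ⊕ ↥R) ≤ Sum.inl b := h
      exact Sum.inl_le_inl_iff.1 h'
    · intro h
      have h' : (Sum.inl a : ↥P ⊕ ↥R) ≤ Sum.inl b := Sum.inl_le_inl_iff.2 h
      exact h'
  have hsurj : Function.Surjective f := by
    rintro ⟨x, hx⟩
    obtain ⟨p, -, rfl⟩ := Finset.mem_image.1 hx
    exact ⟨p, rfl⟩
  exact ⟨(RelIso.ofSurjective (⟨⟨f, hinj⟩, by intro a b; exact hmaple a b⟩ : ↥P ↪o _) hsurj).symm⟩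

lemma subposet_image_inr (P R : FinPartOrd.{0}) :
    Nonempty (↥(subposet (disjSum P R) (Finset.univ.image Sum.inr)) ≃o ↥R) := by
  let f : ↥R → ↥(subposet (disjSum P R) (Finset.univ.image Sum.inr)) :=
    fun p => ⟨Sum.inr p, Finset.mem_image.2 ⟨p, Finset.mem_univ _, rfl⟩⟩
  have hinj : Function.Injective f := by
    intro a b h
    have := congrArg Subtype.val h
    exact Sum.inr_injective this
  have hmaple : ∀ a b : ↥R, f a ≤ f b ↔ a ≤ b := by
    intro a b
    constructor
    · intro h
      have h' : (Sum.inr a : ↥P ⊕ ↥R) ≤ Sum.inr b := h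
      exact Sum.inr_le_inr_iff.1 h'
    · intro h
      have h' : (Sum.inr a : ↥P ⊕ ↥R) ≤ Sum.inr b := Sum.inr_le_inr_iff.2 h
      exact h'
  have hsurj : Function.Surjective f := by
    rintro ⟨x, hx⟩
    obtain ⟨p, -, rfl⟩ := Finset.mem_image.1 hx
    exact ⟨p, rfl⟩
  exact ⟨(RelIso.ofSurjective (⟨⟨f, hinj⟩, by intro a b; exact hmaple a b⟩ : ↥R ↪o _) hsurj).symm⟩

/-- Transfer a global minimum through an iso of a subposet. -/
lemma exists_min_of_iso (Q : FinPartOrd.{0}) (A : Finset ↥Q) (P' : FinPartOrd.{0})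
    (e : ↥(subposet Q A) ≃o ↥P') (β : ↥P') (hβ : ∀ x, β ≤ x) :
    ∃ μ ∈ A, ∀ a ∈ A, μ ≤ a := by
  refine ⟨(e.symm β).1, (e.symm β).2, fun a ha => ?_⟩
  have h1 : β ≤ e ⟨a, ha⟩ := hβ _
  have h2 : e.symm β ≤ e.symm (e ⟨a, ha⟩) := e.symm.le_iff_le.2 h1
  replace h2 : e.symm β ≤ (⟨a, ha⟩ : ↥(subposet Q A)) := le_of_le_of_eq h2 (e.symm_apply_apply _)
  exact h2

/-- No comparability path between left and right in a subposet of a disjoint sum. -/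
lemma no_cross_path (P R : FinPartOrd.{0}) (D : Finset (↥P ⊕ ↥R))
    (u v : {x : ↥P ⊕ ↥R // x ∈ D})
    (h : Relation.ReflTransGen (fun a b : {x : ↥P ⊕ ↥R // x ∈ D} => a ≤ b ∨ b ≤ a) u v) :
    u.1.isLeft = v.1.isLeft := by
  induction h with
  | refl => rfl
  | tail _ hbc ih =>
    refine ih.trans ?_
    rcases hbc with h' | h'
    · exact sum_le_isLeft (show _ ≤ _ from h')
    · exact (sum_le_isLeft (show _ ≤ _ from h')).symm

end Aux3

section Aux4
open Relation

/-- subposet on a finset that is exactly the left side. -/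
lemma subposet_isLeft_iso (P R : FinPartOrd.{0}) (D : Finset ↥(disjSum P R))
    (h : ∀ x : ↥(disjSum P R), x ∈ D ↔ ∃ p : ↥P, x = Sum.inl p) :
    Nonempty (↥(subposet (disjSum P R) D) ≃o ↥P) := by
  let f : ↥P → ↥(subposet (disjSum P R) D) := fun p => ⟨Sum.inl p, (h _).2 ⟨p, rfl⟩⟩
  have hinj : Function.Injective f := by
    intro a b hab
    exact Sum.inl_injective (congrArg Subtype.val hab)
  have hmaple : ∀ a b : ↥P, f a ≤ f b ↔ a ≤ b := by
    intro a b
    constructor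
    · intro hab
      have h' : (Sum.inl a : ↥P ⊕ ↥R) ≤ Sum.inl b := hab
      exact Sum.inl_le_inl_iff.1 h'
    · intro hab
      have h' : (Sum.inl a : ↥P ⊕ ↥R) ≤ Sum.inl b := Sum.inl_le_inl_iff.2 hab
      exact h'
  have hsurj : Function.Surjective f := by
    rintro ⟨x, hx⟩
    obtain ⟨p, rfl⟩ := (h x).1 hx
    exact ⟨p, rfl⟩
  exact ⟨(RelIso.ofSurjective (⟨⟨f, hinj⟩, by intro a b; exact hmaple a b⟩ : ↥P ↪o _) hsurj).symm⟩

lemma subposet_isRight_iso (P R : FinPartOrd.{0}) (D : Finset ↥(disjSum P R))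
    (h : ∀ x : ↥(disjSum P R), x ∈ D ↔ ∃ p : ↥R, x = Sum.inr p) :
    Nonempty (↥(subposet (disjSum P R) D) ≃o ↥R) := by
  let f : ↥R → ↥(subposet (disjSum P R) D) := fun p => ⟨Sum.inr p, (h _).2 ⟨p, rfl⟩⟩
  have hinj : Function.Injective f := by
    intro a b hab
    exact Sum.inr_injective (congrArg Subtype.val hab)
  have hmaple : ∀ a b : ↥R, f a ≤ f b ↔ a ≤ b := by
    intro a b
    constructor
    · intro hab
      have h' : (Sum.inr a : ↥P ⊕ ↥R) ≤ Sum.inr b := hab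
      exact Sum.inr_le_inr_iff.1 h'
    · intro hab
      have h' : (Sum.inr a : ↥P ⊕ ↥R) ≤ Sum.inr b := Sum.inr_le_inr_iff.2 hab
      exact h'
  have hsurj : Function.Surjective f := by
    rintro ⟨x, hx⟩
    obtain ⟨p, rfl⟩ := (h x).1 hx
    exact ⟨p, rfl⟩
  exact ⟨(RelIso.ofSurjective (⟨⟨f, hinj⟩, by intro a b; exact hmaple a b⟩ : ↥R ↪o _) hsurj).symm⟩

end Aux4

section Aux5
open Relation

lemma extract_side_L (m i : ℕ) (P₀ R₀ : FinPartOrd.{0}) (hi : 1 ≤ i) (hP : size P₀ = m)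
    (Q : FinPartOrd.{0})
    (hQset : DSet (m + i + 1) Q = DSet (m + i + 1) (PRposet P₀ R₀ i)) :
    ∃ A₁ : Finset ↥Q, IsDownset Q A₁ ∧ A₁.card = i + m ∧
      Nonempty (↥(subposet Q A₁) ≃o ↥(withChain P₀ i)) ∧ ∃ μ ∈ A₁, ∀ a ∈ A₁, μ ≤ a := by
  haveI instPR : DecidableEq ↥(PRposet P₀ R₀ i) := fun a b => Classical.propDecidable _
  obtain ⟨βR, hβR⟩ := withChain_bot R₀ i hi
  -- the left side of PR
  let D₁ : Finset ↥(PRposet P₀ R₀ i) :=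
    Finset.univ.image (Sum.inl : ↥(withChain P₀ i) → ↥(PRposet P₀ R₀ i))
  have hmemD₁ : ∀ x : ↥(PRposet P₀ R₀ i), x ∈ D₁ ↔ ∃ p : ↥(withChain P₀ i), x = Sum.inl p := by
    intro x
    constructor
    · intro hx
      obtain ⟨p, -, rfl⟩ := Finset.mem_image.1 hx
      exact ⟨p, rfl⟩
    · rintro ⟨p, rfl⟩
      exact Finset.mem_image.2 ⟨p, Finset.mem_univ _, rfl⟩
  obtain ⟨eD⟩ := subposet_isLeft_iso (withChain P₀ i) (withChain R₀ i) D₁ hmemD₁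
  have hcardD₁ : D₁.card = i + m := by
    rw [card_eq_of_iso_subposet D₁ eD]
    have := size_withChain P₀ i
    rw [hP] at this
    exact this
  -- the source downset : all of the left side plus the bottom of the right side
  let D₀ : Finset ↥(PRposet P₀ R₀ i) := insert (Sum.inr βR) D₁
  have hnotmem : (Sum.inr βR : ↥(PRposet P₀ R₀ i)) ∉ D₁ := by
    intro hx
    obtain ⟨p, hp⟩ := (hmemD₁ _).1 hx
    exact Sum.inl_ne_inr hp.symm
  have hcardD₀ : D₀.card = m + i + 1 := by
    show (insert (Sum.inr βR) D₁).card = m + i + 1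
    have hc : D₀.card = D₁.card + 1 := Finset.card_insert_of_notMem (α := ↥(PRposet P₀ R₀ i)) hnotmem
    have h2 : D₁.card + 1 = m + i + 1 := by rw [hcardD₁]; omega
    exact hc.trans h2
  have hdownD₀ : IsDownset (PRposet P₀ R₀ i) D₀ := by
    intro a b ha hba
    obtain bp | br := b
    · exact Finset.mem_insert_of_mem ((hmemD₁ _).2 ⟨bp, rfl⟩)
    · obtain ap | ar := a
      · exact absurd hba Sum.not_inr_le_inl
      · have har : ar = βR := by
          rcases Finset.mem_insert.1 ha with h | h
          · exact Sum.inr_injective h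
          · obtain ⟨p, hp⟩ := (hmemD₁ _).1 h
            exact absurd hp.symm Sum.inl_ne_inr
        have hbr : br ≤ βR := by
          have h' : (Sum.inr br : ↥(withChain P₀ i) ⊕ ↥(withChain R₀ i)) ≤ Sum.inr ar := hba
          rw [har] at h'
          exact Sum.inr_le_inr_iff.1 h'
        have : br = βR := le_antisymm hbr (hβR br)
        rw [this]
        exact Finset.mem_insert_self _ _
  have hmem : cls (subposet (PRposet P₀ R₀ i) D₀) ∈ DSet (m + i + 1) (PRposet P₀ R₀ i) :=
    ⟨D₀, hdownD₀, hcardD₀, rfl⟩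
  rw [← hQset] at hmem
  obtain ⟨A, hAdown, hAcard, hAcls⟩ := hmem
  obtain ⟨e⟩ := cls_eq_iso hAcls
  have hdc : ∀ x y : ↥(PRposet P₀ R₀ i), y ∈ D₁ → x ≤ y → x ∈ D₁ := by
    intro x y hy hxy
    obtain ⟨p, rfl⟩ := (hmemD₁ _).1 hy
    obtain xp | xr := x
    · exact (hmemD₁ _).2 ⟨xp, rfl⟩
    · exact absurd hxy Sum.not_inr_le_inl
  obtain ⟨A₁, hA₁sub, hA₁down, hA₁card, ⟨e₁⟩⟩ :=
    restrict_iso Q (PRposet P₀ R₀ i) A hAdown D₀ D₁ (Finset.subset_insert _ _) hdc e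
  have eA : ↥(subposet Q A₁) ≃o ↥(withChain P₀ i) := e₁.trans eD
  obtain ⟨βP, hβP⟩ := withChain_bot P₀ i hi
  obtain ⟨μ, hμ, hμmin⟩ := exists_min_of_iso Q A₁ (withChain P₀ i) eA βP hβP
  exact ⟨A₁, hA₁down, by rw [hA₁card, hcardD₁], ⟨eA⟩, μ, hμ, hμmin⟩

end Aux5

section Aux6
open Relation

lemma extract_side_R (m i : ℕ) (P₀ R₀ : FinPartOrd.{0}) (hi : 1 ≤ i) (hR : size R₀ = m)
    (Q : FinPartOrd.{0})
    (hQset : DSet (m + i + 1) Q = DSet (m + i + 1) (PRposet P₀ R₀ i)) :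
    ∃ B₁ : Finset ↥Q, IsDownset Q B₁ ∧ B₁.card = i + m ∧
      Nonempty (↥(subposet Q B₁) ≃o ↥(withChain R₀ i)) ∧ ∃ μ ∈ B₁, ∀ a ∈ B₁, μ ≤ a := by
  haveI instPR : DecidableEq ↥(PRposet P₀ R₀ i) := fun a b => Classical.propDecidable _
  obtain ⟨βP, hβP⟩ := withChain_bot P₀ i hi
  let D₁ : Finset ↥(PRposet P₀ R₀ i) :=
    Finset.univ.image (Sum.inr : ↥(withChain R₀ i) → ↥(PRposet P₀ R₀ i))
  have hmemD₁ : ∀ x : ↥(PRposet P₀ R₀ i), x ∈ D₁ ↔ ∃ p : ↥(withChain R₀ i), x = Sum.inr p := by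
    intro x
    constructor
    · intro hx
      obtain ⟨p, -, rfl⟩ := Finset.mem_image.1 hx
      exact ⟨p, rfl⟩
    · rintro ⟨p, rfl⟩
      exact Finset.mem_image.2 ⟨p, Finset.mem_univ _, rfl⟩
  obtain ⟨eD⟩ := subposet_isRight_iso (withChain P₀ i) (withChain R₀ i) D₁ hmemD₁
  have hcardD₁ : D₁.card = i + m := by
    rw [card_eq_of_iso_subposet D₁ eD]
    have := size_withChain R₀ i
    rw [hR] at this
    exact this
  let D₀ : Finset ↥(PRposet P₀ R₀ i) := insert (Sum.inl βP) D₁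
  have hnotmem : (Sum.inl βP : ↥(PRposet P₀ R₀ i)) ∉ D₁ := by
    intro hx
    obtain ⟨p, hp⟩ := (hmemD₁ _).1 hx
    exact Sum.inl_ne_inr hp
  have hcardD₀ : D₀.card = m + i + 1 := by
    show (insert (Sum.inl βP) D₁).card = m + i + 1
    have hc : D₀.card = D₁.card + 1 := Finset.card_insert_of_notMem (α := ↥(PRposet P₀ R₀ i)) hnotmem
    have h2 : D₁.card + 1 = m + i + 1 := by rw [hcardD₁]; omega
    exact hc.trans h2
  have hdownD₀ : IsDownset (PRposet P₀ R₀ i) D₀ := by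
    intro a b ha hba
    obtain bp | br := b
    · obtain ap | ar := a
      · have har : ap = βP := by
          rcases Finset.mem_insert.1 ha with h | h
          · exact Sum.inl_injective h
          · obtain ⟨p, hp⟩ := (hmemD₁ _).1 h
            exact absurd hp Sum.inl_ne_inr
        have hbp : bp ≤ βP := by
          have h' : (Sum.inl bp : ↥(withChain P₀ i) ⊕ ↥(withChain R₀ i)) ≤ Sum.inl ap := hba
          rw [har] at h'
          exact Sum.inl_le_inl_iff.1 h'
        have : bp = βP := le_antisymm hbp (hβP bp)
        rw [this]
        exact Finset.mem_insert_self _ _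
      · exact absurd hba Sum.not_inl_le_inr
    · exact Finset.mem_insert_of_mem ((hmemD₁ _).2 ⟨br, rfl⟩)
  have hmem : cls (subposet (PRposet P₀ R₀ i) D₀) ∈ DSet (m + i + 1) (PRposet P₀ R₀ i) :=
    ⟨D₀, hdownD₀, hcardD₀, rfl⟩
  rw [← hQset] at hmem
  obtain ⟨A, hAdown, hAcard, hAcls⟩ := hmem
  obtain ⟨e⟩ := cls_eq_iso hAcls
  have hdc : ∀ x y : ↥(PRposet P₀ R₀ i), y ∈ D₁ → x ≤ y → x ∈ D₁ := by
    intro x y hy hxy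
    obtain ⟨p, rfl⟩ := (hmemD₁ _).1 hy
    obtain xp | xr := x
    · exact absurd hxy Sum.not_inl_le_inr
    · exact (hmemD₁ _).2 ⟨xr, rfl⟩
  obtain ⟨B₁, hB₁sub, hB₁down, hB₁card, ⟨e₁⟩⟩ :=
    restrict_iso Q (PRposet P₀ R₀ i) A hAdown D₀ D₁ (Finset.subset_insert _ _) hdc e
  have eB : ↥(subposet Q B₁) ≃o ↥(withChain R₀ i) := e₁.trans eD
  obtain ⟨βR, hβR⟩ := withChain_bot R₀ i hi
  obtain ⟨μ, hμ, hμmin⟩ := exists_min_of_iso Q B₁ (withChain R₀ i) eB βR hβR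
  exact ⟨B₁, hB₁down, by rw [hB₁card, hcardD₁], ⟨eB⟩, μ, hμ, hμmin⟩

end Aux6

section Aux7
open Relation

lemma no_connected_downset (m i : ℕ) (P₀ R₀ : FinPartOrd.{0}) (hP : size P₀ = m)
    (hR : size R₀ = m) (Q : FinPartOrd.{0})
    (hQset : DSet (m + i + 1) Q = DSet (m + i + 1) (PRposet P₀ R₀ i))
    (E : Finset ↥Q) (hEdown : IsDownset Q E) (hEcard : E.card = m + i + 1)
    (μ : {x : ↥Q // x ∈ E})
    (hcon : ∀ x : {x : ↥Q // x ∈ E},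
      Relation.ReflTransGen (fun a b : {x : ↥Q // x ∈ E} => a ≤ b ∨ b ≤ a) x μ) : False := by
  have hmem : cls (subposet Q E) ∈ DSet (m + i + 1) (PRposet P₀ R₀ i) := by
    rw [← hQset]; exact ⟨E, hEdown, hEcard, rfl⟩
  obtain ⟨D', hD'down, hD'card, hD'cls⟩ := hmem
  obtain ⟨g⟩ := cls_eq_iso hD'cls
  -- the two sides of PR
  let L : Finset ↥(PRposet P₀ R₀ i) :=
    Finset.univ.image (Sum.inl : ↥(withChain P₀ i) → ↥(PRposet P₀ R₀ i))
  let Rf : Finset ↥(PRposet P₀ R₀ i) :=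
    Finset.univ.image (Sum.inr : ↥(withChain R₀ i) → ↥(PRposet P₀ R₀ i))
  have hmemL : ∀ x : ↥(PRposet P₀ R₀ i), x ∈ L ↔ ∃ p : ↥(withChain P₀ i), x = Sum.inl p := by
    intro x
    constructor
    · intro hx
      obtain ⟨p, -, rfl⟩ := Finset.mem_image.1 hx
      exact ⟨p, rfl⟩
    · rintro ⟨p, rfl⟩
      exact Finset.mem_image.2 ⟨p, Finset.mem_univ _, rfl⟩
  have hmemR : ∀ x : ↥(PRposet P₀ R₀ i), x ∈ Rf ↔ ∃ p : ↥(withChain R₀ i), x = Sum.inr p := by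
    intro x
    constructor
    · intro hx
      obtain ⟨p, -, rfl⟩ := Finset.mem_image.1 hx
      exact ⟨p, rfl⟩
    · rintro ⟨p, rfl⟩
      exact Finset.mem_image.2 ⟨p, Finset.mem_univ _, rfl⟩
  obtain ⟨eL⟩ := subposet_isLeft_iso (withChain P₀ i) (withChain R₀ i) L hmemL
  obtain ⟨eR⟩ := subposet_isRight_iso (withChain P₀ i) (withChain R₀ i) Rf hmemR
  have hcardL : L.card = i + m := by
    rw [card_eq_of_iso_subposet L eL]
    have := size_withChain P₀ i
    rw [hP] at this
    exact this
  have hcardR : Rf.card = i + m := by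
    rw [card_eq_of_iso_subposet Rf eR]
    have := size_withChain R₀ i
    rw [hR] at this
    exact this
  -- both sides must be present in D'
  have hexL : ∃ p : ↥(withChain P₀ i), (Sum.inl p : ↥(PRposet P₀ R₀ i)) ∈ D' := by
    by_contra hno
    push_neg at hno
    have hsub : D' ⊆ Rf := by
      intro x hx
      obtain xp | xr := x
      · exact absurd hx (hno xp)
      · exact (hmemR _).2 ⟨xr, rfl⟩
    have := Finset.card_le_card hsub
    rw [hD'card, hcardR] at this
    omega
  have hexR : ∃ p : ↥(withChain R₀ i), (Sum.inr p : ↥(PRposet P₀ R₀ i)) ∈ D' := by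
    by_contra hno
    push_neg at hno
    have hsub : D' ⊆ L := by
      intro x hx
      obtain xp | xr := x
      · exact (hmemL _).2 ⟨xp, rfl⟩
      · exact absurd hx (hno xr)
    have := Finset.card_le_card hsub
    rw [hD'card, hcardL] at this
    omega
  obtain ⟨up, hup⟩ := hexL
  obtain ⟨vr, hvr⟩ := hexR
  let u : {x : ↥(PRposet P₀ R₀ i) // x ∈ D'} := ⟨Sum.inl up, hup⟩
  let v : {x : ↥(PRposet P₀ R₀ i) // x ∈ D'} := ⟨Sum.inr vr, hvr⟩
  have hsym : Symmetric (fun a b : {x : ↥Q // x ∈ E} => a ≤ b ∨ b ≤ a) :=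
    fun a b h => h.symm
  have hpathE : Relation.ReflTransGen (fun a b : {x : ↥Q // x ∈ E} => a ≤ b ∨ b ≤ a)
      (g u) (g v) :=
    (hcon (g u)).trans ((@Relation.ReflTransGen.symmetric _ _ ⟨fun a b h => hsym h⟩).symm _ _ (hcon (g v)))
  have hlift := Relation.ReflTransGen.lift
    (r := fun a b : {x : ↥Q // x ∈ E} => a ≤ b ∨ b ≤ a)
    (p := fun a b : {x : ↥(PRposet P₀ R₀ i) // x ∈ D'} => a ≤ b ∨ b ≤ a)
    (fun t : {x : ↥Q // x ∈ E} => g.symm t)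
    (fun a b (hab : a ≤ b ∨ b ≤ a) => hab.imp (fun h => g.symm.monotone h) (fun h => g.symm.monotone h)) _ _ hpathE
  simp only [Function.onFun, g.symm_apply_apply] at hlift
  replace hlift := (congrArg₂ (Relation.ReflTransGen
    (fun a b : {x : ↥(PRposet P₀ R₀ i) // x ∈ D'} => a ≤ b ∨ b ≤ a))
    (g.symm_apply_apply u) (g.symm_apply_apply v)).mp hlift
  have := no_cross_path (withChain P₀ i) (withChain R₀ i) D' u v hlift
  simp [u, v] at this

end Aux7


/-- For non-isomorphic `P₀`, `R₀` of size `m` and `i ≥ 1`, no witness to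
`D_{m+i+1}(P_iR_i)` has size less than `|P_iR_i| = 2m + 2i`. -/
theorem ladder_no_smaller_witness (m : ℕ) (P₀ R₀ : FinPartOrd.{0}) (hP : size P₀ = m)
    (hR : size R₀ = m) (hniso : ¬Nonempty (↥P₀ ≃o ↥R₀)) (i : ℕ) (hi : 1 ≤ i) :
    size (PRposet P₀ R₀ i) = 2 * m + 2 * i ∧
      ∀ Q : FinPartOrd.{0}, IsWitness (m + i + 1) (DSet (m + i + 1) (PRposet P₀ R₀ i)) Q →
        2 * m + 2 * i ≤ size Q := by
  constructor
  · have h1 : size (PRposet P₀ R₀ i) =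
        Fintype.card (↥(withChain P₀ i) ⊕ ↥(withChain R₀ i)) := fintype_card_indep ..
    have h2 : Fintype.card ↥(withChain P₀ i) = size (withChain P₀ i) := fintype_card_indep ..
    have h3 : Fintype.card ↥(withChain R₀ i) = size (withChain R₀ i) := fintype_card_indep ..
    rw [h1, Fintype.card_sum, h2, h3, size_withChain, size_withChain, hP, hR]
    omega
  · intro Q hQ
    haveI instQ : DecidableEq ↥Q := fun a b => Classical.propDecidable _
    have hQset : DSet (m + i + 1) Q = DSet (m + i + 1) (PRposet P₀ R₀ i) := hQ
    obtain ⟨A₁, hA₁down, hA₁card, ⟨eA⟩, μA, hμA, hμAmin⟩ :=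
      extract_side_L m i P₀ R₀ hi hP Q hQset
    obtain ⟨B₁, hB₁down, hB₁card, ⟨eB⟩, b₀, hb₀, hb₀min⟩ :=
      extract_side_R m i P₀ R₀ hi hR Q hQset
    by_cases heq : A₁ = B₁
    · exfalso
      subst heq
      exact hniso (peel (eA.symm.trans eB))
    by_cases hint : ∀ w, w ∈ A₁ → w ∉ B₁
    · -- disjoint sides
      have hdisj : Disjoint A₁ B₁ := Finset.disjoint_left.2 hint
      have hcard := Finset.card_le_card (Finset.subset_univ (A₁ ∪ B₁))
      rw [Finset.card_union_of_disjoint hdisj, hA₁card, hB₁card, Finset.card_univ] at hcard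
      have hQcard : Fintype.card ↥Q = size Q := fintype_card_indep ..
      rw [hQcard] at hcard
      omega
    · exfalso
      push_neg at hint
      obtain ⟨w, hwA, hwB⟩ := hint
      have hne : (B₁ \ A₁).Nonempty := by
        rw [Finset.sdiff_nonempty]
        intro hsub
        exact heq (Finset.eq_of_subset_of_card_le hsub
          (le_of_eq (hA₁card.trans hB₁card.symm))).symm
      obtain ⟨z, hz, hzmin'⟩ := Finset.exists_minimal hne
      have hzmin : ∀ x ∈ B₁ \ A₁, ¬x < z := fun x hx hlt => hlt.not_ge (hzmin' hx hlt.le)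
      have hzB : z ∈ B₁ := (Finset.mem_sdiff.1 hz).1
      have hzA : z ∉ A₁ := (Finset.mem_sdiff.1 hz).2
      have hEcard : (insert z A₁).card = m + i + 1 := by
        rw [Finset.card_insert_of_notMem hzA, hA₁card]; omega
      have hEdown : IsDownset Q (insert z A₁) := by
        intro a b ha hba
        rcases Finset.mem_insert.1 ha with rfl | haA
        · have hbB : b ∈ B₁ := hB₁down hzB hba
          by_cases hbA : b ∈ A₁
          · exact Finset.mem_insert_of_mem hbA
          · have hbd : b ∈ B₁ \ A₁ := Finset.mem_sdiff.2 ⟨hbB, hbA⟩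
            have hbz : b = a := by
              rcases lt_or_eq_of_le hba with h | h
              · exact absurd h (hzmin b hbd)
              · exact h
            rw [hbz]
            exact Finset.mem_insert_self _ _
        · exact Finset.mem_insert_of_mem (hA₁down haA hba)
      have hμE : μA ∈ insert z A₁ := Finset.mem_insert_of_mem hμA
      have hcon : ∀ x : {x : ↥Q // x ∈ insert z A₁},
          Relation.ReflTransGen
            (fun a b : {x : ↥Q // x ∈ insert z A₁} => a ≤ b ∨ b ≤ a) x ⟨μA, hμE⟩ := by
        intro x
        rcases Finset.mem_insert.1 x.2 with hxz | hxA
        · by_cases hb₀A : b₀ ∈ A₁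
          · have h1 : b₀ ≤ x.1 := by rw [hxz]; exact hb₀min z hzB
            have h2 : μA ≤ b₀ := hμAmin b₀ hb₀A
            exact Relation.ReflTransGen.head
              (b := ⟨b₀, Finset.mem_insert_of_mem hb₀A⟩)
              (Or.inr h1) (Relation.ReflTransGen.single (Or.inr h2))
          · have hb₀d : b₀ ∈ B₁ \ A₁ := Finset.mem_sdiff.2 ⟨hb₀, hb₀A⟩
            have hb₀z : b₀ = z :=
              (lt_or_eq_of_le (hb₀min z hzB)).resolve_left (hzmin b₀ hb₀d)
            have h1 : x.1 ≤ w := by rw [hxz, ← hb₀z]; exact hb₀min w hwB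
            have h2 : μA ≤ w := hμAmin w hwA
            exact Relation.ReflTransGen.head
              (b := ⟨w, Finset.mem_insert_of_mem hwA⟩)
              (Or.inl h1) (Relation.ReflTransGen.single (Or.inr h2))
        · exact Relation.ReflTransGen.single (Or.inr (hμAmin x.1 hxA))
      exact no_connected_downset m i P₀ R₀ hP hR Q hQset (insert z A₁) hEdown hEcard
        ⟨μA, hμE⟩ hcon
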